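/- For every z ∈ ℝ^p, the natural map at the proximal point is controlled by the normal map: (1 − γρ)‖F^nat(prox_{γφ}(z))‖ ≤ ‖F^nor(z)‖, where F^nat(x) := γ^{-1}(x − prox_{γφ}(x − γ∇f(x))). -/

import Mathlib

open scoped RealInnerProductSpace

private lemma combo_norm_sq {E : Type*} [NormedAddCommGroup E] [InnerProductSpace ℝ E]
    (x u : E) (t : ℝ) :
    ‖(1 - t) • x + t • u‖ ^ 2
      = (1 - t) * ‖x‖ ^ 2 + t * ‖u‖ ^ 2 - t * (1 - t) * ‖u - x‖ ^ 2 := by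
  have h1 : ((1:ℝ) - t) • x + t • u = x + t • (u - x) := by
    rw [smul_sub, sub_smul, one_smul]; abel
  have h3 : ⟪x, u - x⟫ = ⟪x, u⟫ - ‖x‖ ^ 2 := by
    rw [inner_sub_right, real_inner_self_eq_norm_sq]
  have h2 : ‖u - x‖ ^ 2 = ‖u‖ ^ 2 - 2 * ⟪x, u⟫ + ‖x‖ ^ 2 := by
    rw [norm_sub_sq_real, real_inner_comm]
  rw [h1, norm_add_sq_real, norm_smul, real_inner_smul_right, h3, Real.norm_eq_abs,
    mul_pow, sq_abs, h2]
  ring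

/-- Strong minimality at a prox point of a `ρ`-weakly convex function. -/
private lemma key_strong_min {E : Type*} [NormedAddCommGroup E] [InnerProductSpace ℝ E]
    (φ : E → ℝ) (ρ γ : ℝ) (hγ : 0 < γ) (hγρ : γ * ρ < 1)
    (hwc : ConvexOn ℝ Set.univ (fun y => φ y + ρ / 2 * ‖y‖ ^ 2))
    {z x : E} (hx : IsMinOn (fun y => φ y + ‖y - z‖ ^ 2 / (2 * γ)) Set.univ x)
    (u : E) :
    φ x + ‖x - z‖ ^ 2 / (2 * γ) + (γ⁻¹ - ρ) / 2 * ‖u - x‖ ^ 2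
      ≤ φ u + ‖u - z‖ ^ 2 / (2 * γ) := by
  set c : ℝ := (γ⁻¹ - ρ) / 2 * ‖u - x‖ ^ 2 with hc
  have hρinv : ρ < γ⁻¹ := by
    nlinarith [mul_inv_cancel₀ hγ.ne', inv_pos.mpr hγ]
  have hcnn : 0 ≤ c := by
    apply mul_nonneg (by linarith) (by positivity)
  have main : ∀ t : ℝ, 0 < t → t < 1 →
      φ x + ‖x - z‖ ^ 2 / (2 * γ) + (1 - t) * c ≤ φ u + ‖u - z‖ ^ 2 / (2 * γ) := by
    intro t ht0 ht1
    have hconv := hwc.2 (Set.mem_univ x) (Set.mem_univ u)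
      (le_of_lt (by linarith : (0:ℝ) < 1 - t)) (le_of_lt ht0) (by ring)
    simp only [smul_eq_mul] at hconv
    have hmin := hx (Set.mem_univ ((1 - t) • x + t • u))
    simp only [Set.mem_setOf_eq] at hmin
    have e1 := combo_norm_sq x u t
    have e2 : ‖((1 - t) • x + t • u) - z‖ ^ 2
        = (1 - t) * ‖x - z‖ ^ 2 + t * ‖u - z‖ ^ 2 - t * (1 - t) * ‖u - x‖ ^ 2 := by
      have h : ((1 - t) • x + t • u) - z = (1 - t) • (x - z) + t • (u - z) := by
        rw [smul_sub, smul_sub, sub_smul, sub_smul, one_smul, one_smul]; abel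
      rw [h, combo_norm_sq]
      congr 2
      rw [show (u - z) - (x - z) = u - x by abel]
    rw [e1] at hconv
    rw [e2] at hmin
    have hs : γ⁻¹ = 2 * (2 * γ)⁻¹ := by rw [mul_inv]; ring
    have hspos : 0 < (2 * γ)⁻¹ := by positivity
    rw [hc, hs]
    rw [div_eq_mul_inv, div_eq_mul_inv] at hmin ⊢
    have h4 : t * (φ x + ‖x - z‖ ^ 2 * (2 * γ)⁻¹ + (1 - t) * ((2 * (2 * γ)⁻¹ - ρ) / 2 * ‖u - x‖ ^ 2))
        ≤ t * (φ u + ‖u - z‖ ^ 2 * (2 * γ)⁻¹) := by nlinarith [hmin, hconv]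
    exact le_of_mul_le_mul_left h4 ht0
  by_contra hlt
  push_neg at hlt
  set A := φ x + ‖x - z‖ ^ 2 / (2 * γ)
  set B := φ u + ‖u - z‖ ^ 2 / (2 * γ)
  set ε := A + c - B with hε
  have hεpos : 0 < ε := by simp only [hε]; linarith
  have ht0 : 0 < min (1/2) (ε / (2 * (c + 1))) := by positivity
  have ht1 : min (1/2) (ε / (2 * (c + 1))) < 1 :=
    lt_of_le_of_lt (min_le_left _ _) (by norm_num)
  have h := main _ ht0 ht1
  have h2 : min (1/2) (ε / (2 * (c + 1))) * (c + 1) ≤ ε / 2 := by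
    calc min (1/2) (ε / (2 * (c + 1))) * (c + 1) ≤ (ε / (2 * (c + 1))) * (c + 1) := by
          apply mul_le_mul_of_nonneg_right (min_le_right _ _) (by linarith)
      _ = ε / 2 := by field_simp
  set m := min (1/2) (ε / (2 * (c + 1))) with hm
  nlinarith [h, h2, ht0, hεpos, mul_nonneg ht0.le hcnn]

/-- The natural map at the proximal point is controlled by the normal map:
`(1 − γρ)‖F^nat(prox_{γφ}(z))‖ ≤ ‖F^nor(z)‖`, where
`F^nat(x) = γ⁻¹(x − prox_{γφ}(x − γ∇f(x)))`. -/
theorem natural_map_le_normal_map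
    {p : ℕ} (hp : 1 ≤ p) (ρ γ L : ℝ) (hρ : 0 ≤ ρ) (hγ : 0 < γ) (hγρ : γ * ρ < 1)
    (hL : 0 ≤ L)
    (φ : EuclideanSpace ℝ (Fin p) → ℝ)
    (hφlsc : LowerSemicontinuous φ)
    (hφwc : ConvexOn ℝ Set.univ (fun y => φ y + ρ / 2 * ‖y‖ ^ 2))
    (prox : EuclideanSpace ℝ (Fin p) → EuclideanSpace ℝ (Fin p))
    (hprox : ∀ z, IsMinOn (fun y => φ y + ‖y - z‖ ^ 2 / (2 * γ)) Set.univ (prox z))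
    (hproxUnique : ∀ z u,
      IsMinOn (fun y => φ y + ‖y - z‖ ^ 2 / (2 * γ)) Set.univ u → u = prox z)
    (f : EuclideanSpace ℝ (Fin p) → ℝ)
    (f' : EuclideanSpace ℝ (Fin p) → EuclideanSpace ℝ (Fin p))
    (hf : ∀ x, HasGradientAt f (f' x) x)
    (hlip : ∀ x y, ‖f' x - f' y‖ ≤ L * ‖x - y‖)
    (Fnor : EuclideanSpace ℝ (Fin p) → EuclideanSpace ℝ (Fin p))
    (hFnor : ∀ z, Fnor z = f' (prox z) + γ⁻¹ • (z - prox z))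
    (Fnat : EuclideanSpace ℝ (Fin p) → EuclideanSpace ℝ (Fin p))
    (hFnat : ∀ x, Fnat x = γ⁻¹ • (x - prox (x - γ • f' x))) :
    ∀ z : EuclideanSpace ℝ (Fin p),
      (1 - γ * ρ) * ‖Fnat (prox z)‖ ≤ ‖Fnor z‖ := by
  intro z
  set x := prox z with hxdef
  set w := x - γ • f' x with hwdef
  set u := prox w with hudef
  -- strong minimality both ways
  have k1 := key_strong_min φ ρ γ hγ hγρ hφwc (hprox z) u
  have k2 := key_strong_min φ ρ γ hγ hγρ hφwc (hprox w) x
  rw [← hxdef] at k1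
  rw [← hudef] at k2
  -- the parallelogram-type identity
  have iden : ‖u - z‖^2 + ‖x - w‖^2 - ‖x - z‖^2 - ‖u - w‖^2 = 2 * ⟪x - u, z - w⟫ := by
    simp only [norm_sub_sq_real, inner_sub_left, inner_sub_right]
    ring
  have hnorm_rev : ‖x - u‖ = ‖u - x‖ := norm_sub_rev _ _
  -- monotonicity inequality
  have hmono : (1 - γ * ρ) * ‖x - u‖ ^ 2 ≤ ⟪x - u, z - w⟫ := by
    have h2γ : 0 < 2 * γ := by linarith
    have hsum : (γ⁻¹ - ρ) * ‖u - x‖ ^ 2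
        ≤ (‖u - z‖^2 + ‖x - w‖^2 - ‖x - z‖^2 - ‖u - w‖^2) / (2 * γ) := by
      rw [hnorm_rev] at k2
      have hh : (γ⁻¹ - ρ) * ‖u - x‖ ^ 2 * (2 * γ) ≤
          ‖u - z‖ ^ 2 + ‖x - w‖ ^ 2 - ‖x - z‖ ^ 2 - ‖u - w‖ ^ 2 := by
        have k1' := mul_le_mul_of_nonneg_right k1 h2γ.le
        have k2' := mul_le_mul_of_nonneg_right k2 h2γ.le
        have e : ∀ a : ℝ, a / (2 * γ) * (2 * γ) = a := fun a => div_mul_cancel₀ a h2γ.ne'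
        nlinarith [k1', k2', e (‖x - z‖ ^ 2), e (‖u - z‖ ^ 2), e (‖u - w‖ ^ 2), e (‖x - w‖ ^ 2)]
      rw [le_div_iff₀ h2γ]
      linarith [hh]
    rw [iden] at hsum
    have hγγ : γ * ((γ⁻¹ - ρ)) = 1 - γ * ρ := by
      field_simp
    calc (1 - γ * ρ) * ‖x - u‖ ^ 2 = γ * ((γ⁻¹ - ρ) * ‖u - x‖ ^ 2) := by
          rw [hnorm_rev]; rw [← hγγ]; ring
      _ ≤ γ * ((2 * ⟪x - u, z - w⟫) / (2 * γ)) := by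
          exact mul_le_mul_of_nonneg_left hsum hγ.le
      _ = ⟪x - u, z - w⟫ := by field_simp
  have hcs : ⟪x - u, z - w⟫ ≤ ‖x - u‖ * ‖z - w‖ := real_inner_le_norm _ _
  -- conclude (1 - γρ)‖x - u‖ ≤ ‖z - w‖
  have hfin : (1 - γ * ρ) * ‖x - u‖ ≤ ‖z - w‖ := by
    rcases eq_or_lt_of_le (norm_nonneg (x - u)) with h0 | h0
    · rw [← h0, mul_zero]; exact norm_nonneg _
    · have := hmono.trans hcs
      nlinarith [this, h0]
  -- rewrite the maps
  have hFnat' : ‖Fnat x‖ = γ⁻¹ * ‖x - u‖ := by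
    rw [hFnat x, ← hwdef, ← hudef, norm_smul, Real.norm_eq_abs,
      abs_of_pos (by positivity : (0:ℝ) < γ⁻¹)]
  have hFnor' : ‖Fnor z‖ = γ⁻¹ * ‖z - w‖ := by
    have : Fnor z = γ⁻¹ • (z - w) := by
      rw [hFnor z, ← hxdef, hwdef]
      rw [show z - (x - γ • f' x) = (z - x) + γ • f' x by abel, smul_add, smul_smul,
        inv_mul_cancel₀ hγ.ne', one_smul]
      abel
    rw [this, norm_smul, Real.norm_eq_abs, abs_of_pos (by positivity : (0:ℝ) < γ⁻¹)]
  rw [hFnat', hFnor']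
  have hγinv : 0 ≤ γ⁻¹ := by positivity
  calc (1 - γ * ρ) * (γ⁻¹ * ‖x - u‖) = γ⁻¹ * ((1 - γ * ρ) * ‖x - u‖) := by ring
    _ ≤ γ⁻¹ * ‖z - w‖ := mul_le_mul_of_nonneg_left hfin hγinv
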